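/- arXiv:2103.15333 — 4 statements merged into one kernel-verified Lean document; each statement's English description precedes it below -/
import Mathlib

section
/- Let L be a real n×n matrix with nonpositive off-diagonal entries and zero row sums, and let D, M be diagonal matrices with positive diagonal entries. Then every nonzero real eigenvalue λ of the block matrix J = [[0, I], [-M⁻¹L, -M⁻¹D]] is negative. -/
open Matrix

/-- Every nonzero real eigenvalue of `J = [[0, I], [-M⁻¹L, -M⁻¹D]]` is negative, when `L`
has zero row sums and nonpositive off-diagonal entries and `D, M` are positive diagonal. -/
theorem nonzero_real_eigenvalue_negative
    {n : ℕ} (L : Matrix (Fin n) (Fin n) ℝ) (d m : Fin n → ℝ)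
    (hrow : L *ᵥ (fun _ => (1 : ℝ)) = 0)
    (hoff : ∀ i j, i ≠ j → L i j ≤ 0)
    (hd : ∀ i, 0 < d i) (hm : ∀ i, 0 < m i)
    (lam : ℝ) (hlam0 : lam ≠ 0)
    (heig : ∃ v : (Fin n ⊕ Fin n) → ℝ, v ≠ 0 ∧
      (Matrix.fromBlocks (0 : Matrix (Fin n) (Fin n) ℝ) (1 : Matrix (Fin n) (Fin n) ℝ)
        (-((Matrix.diagonal m)⁻¹ * L)) (-((Matrix.diagonal m)⁻¹ * Matrix.diagonal d)))
        *ᵥ v = lam • v) :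
    lam < 0 := by
  obtain ⟨v, hv, hJ⟩ := heig
  set x : Fin n → ℝ := fun i => v (Sum.inl i) with hxdef
  set y : Fin n → ℝ := fun i => v (Sum.inr i) with hydef
  have hv' : v = Sum.elim x y := by funext j; cases j <;> rfl
  rw [hv', fromBlocks_mulVec] at hJ
  have hminv : (Matrix.diagonal m)⁻¹ = Matrix.diagonal (fun i => (m i)⁻¹) := by
    refine Matrix.inv_eq_right_inv ?_
    have h1 : (fun i => m i * (m i)⁻¹) = fun _ => (1 : ℝ) :=
      funext fun i => mul_inv_cancel₀ (hm i).ne'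
    rw [Matrix.diagonal_mul_diagonal, h1, Matrix.diagonal_one]
  have h1 : ∀ i, y i = lam * x i := by
    intro i
    have := congrFun hJ (Sum.inl i)
    simpa using this
  have h2 : ∀ i, (L *ᵥ x) i + lam * d i * x i + lam ^ 2 * m i * x i = 0 := by
    intro i
    have := congrFun hJ (Sum.inr i)
    simp only [Sum.elim_inr, Sum.elim_comp_inl, Sum.elim_comp_inr, Pi.add_apply,
      Pi.smul_apply, smul_eq_mul, hminv, Matrix.neg_mulVec, ← Matrix.mulVec_mulVec,
      Pi.neg_apply, Matrix.mulVec_diagonal] at this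
    have hmi : m i ≠ 0 := (hm i).ne'
    rw [h1 i] at this
    field_simp at this
    have hg : ((L *ᵥ x) i + lam * d i * x i + lam ^ 2 * m i * x i) * m i = 0 := by
      linear_combination -(m i) * this
    exact (mul_eq_zero.mp hg).resolve_right hmi
  have hxne : x ≠ 0 := by
    intro h
    apply hv
    funext j
    cases j with
    | inl i => exact congrFun h i
    | inr i =>
      have hxi : x i = 0 := by simpa using congrFun h i
      show y i = 0
      rw [h1 i, hxi, mul_zero]
  obtain ⟨i0, hi0⟩ := Function.ne_iff.mp hxne
  have hi0' : x i0 ≠ 0 := by simpa using hi0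
  obtain ⟨i, -, hmax⟩ :=
    Finset.exists_max_image Finset.univ (fun i => |x i|) ⟨i0, Finset.mem_univ i0⟩
  have habs : 0 < |x i| := lt_of_lt_of_le (abs_pos.mpr hi0') (hmax i0 (Finset.mem_univ i0))
  have hane : x i ≠ 0 := abs_pos.mp habs
  have ha2 : 0 < x i ^ 2 := by positivity
  have hrowi : ∑ j, L i j = 0 := by
    have := congrFun hrow i
    simpa [Matrix.mulVec, dotProduct] using this
  have heq : x i * (L *ᵥ x) i = ∑ j, (L i j * (x i * x j - x i ^ 2) + x i ^ 2 * L i j) := by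
    simp only [Matrix.mulVec, dotProduct, Finset.mul_sum]
    exact Finset.sum_congr rfl fun j _ => by ring
  rw [Finset.sum_add_distrib, ← Finset.mul_sum, hrowi, mul_zero, add_zero] at heq
  have hkey : 0 ≤ x i * (L *ᵥ x) i := by
    rw [heq]
    apply Finset.sum_nonneg
    intro j _
    rcases eq_or_ne j i with rfl | hji
    · have hz : x j * x j - x j ^ 2 = 0 := by ring
      rw [hz, mul_zero]
    · have hL : L i j ≤ 0 := hoff i j (Ne.symm hji)
      have hja : |x j| ≤ |x i| := hmax j (Finset.mem_univ j)
      have hterm : x i * x j - x i ^ 2 ≤ 0 := by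
        nlinarith [le_abs_self (x i * x j), abs_mul (x i) (x j), sq_abs (x i),
          abs_nonneg (x i), abs_nonneg (x j)]
      nlinarith [hL, hterm]
  have h2a : x i * ((L *ᵥ x) i + lam * d i * x i + lam ^ 2 * m i * x i) = 0 := by
    rw [h2 i, mul_zero]
  have hcomb : lam * (d i + lam * m i) * x i ^ 2 ≤ 0 := by nlinarith [hkey, h2a]
  rcases lt_trichotomy lam 0 with h | h | h
  · exact h
  · exact absurd h hlam0
  · exfalso
    have hdl : 0 < d i + lam * m i := by nlinarith [hd i, hm i]
    have hpos : 0 < lam * (d i + lam * m i) * x i ^ 2 := mul_pos (mul_pos h hdl) ha2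
    linarith
end

section
/- Let λ ∈ ℂ with Re(λ) > 0 and let d, m, ℓ be reals with d, m > 0 and ℓ ≥ 0. If ℓ ≤ d²/(2m), then |ℓ + λ d + λ² m| > ℓ. -/
/-- Core scalar inequality of the distributed stability certificate: if `Re λ > 0`,
`d, m > 0`, `0 ≤ ℓ ≤ d²/(2m)`, then `|ℓ + λ d + λ² m| > ℓ`. -/
theorem certificate_core_inequality
    (lam : ℂ) (hre : 0 < lam.re)
    (d m l : ℝ) (hd : 0 < d) (hm : 0 < m) (hl : 0 ≤ l)
    (hcert : l ≤ d ^ 2 / (2 * m)) :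
    ‖(l : ℂ) + lam * d + lam ^ 2 * m‖ > l := by
  set z : ℂ := (l : ℂ) + lam * d + lam ^ 2 * m with hz
  have hsq : l ^ 2 < Complex.normSq z := by
    have hre' : z.re = l + lam.re * d + (lam.re ^ 2 - lam.im ^ 2) * m := by
      simp [hz, Complex.add_re, Complex.mul_re, Complex.sq_norm, pow_two]
    have him : z.im = lam.im * (d + 2 * lam.re * m) := by
      simp [hz, Complex.add_im, Complex.mul_im, pow_two]
      ring
    have hns : Complex.normSq z = z.re ^ 2 + z.im ^ 2 := by
      rw [Complex.normSq_apply]; ring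
    rw [hns, hre', him]
    have hcert'' := (le_div_iff₀ (by positivity : (0:ℝ) < 2 * m)).mp hcert
    have hcert' : 2 * m * l ≤ d ^ 2 := by linarith
    have hA : l < l + lam.re * d + lam.re ^ 2 * m := by nlinarith [mul_pos hre hd, mul_pos (mul_pos hre hre) hm]
    have hA2 : l ^ 2 < (l + lam.re * d + lam.re ^ 2 * m) ^ 2 := by
      apply pow_lt_pow_left₀ hA hl
      norm_num
    nlinarith [hA2, mul_nonneg (sq_nonneg lam.im) (sub_nonneg.mpr hcert'),
      mul_nonneg (sq_nonneg lam.im) (mul_nonneg (mul_nonneg hre.le hd.le) hm.le),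
      mul_nonneg (sq_nonneg lam.im) (mul_nonneg (sq_nonneg lam.re) (sq_nonneg m)),
      mul_nonneg (sq_nonneg lam.im) (sub_nonneg.mpr hcert'),
      sq_nonneg (lam.im ^ 2 * m)]
  have habs : ‖z‖ = Real.sqrt (Complex.normSq z) := Complex.norm_def z
  rw [gt_iff_lt, habs]
  have := Real.lt_sqrt (x := l) (y := Complex.normSq z) hl
  rw [this]
  simpa [pow_two] using hsq
end

section
/- Let L be a real n×n matrix with zero row sums and nonpositive off-diagonal entries, and D = diag(d_i), M = diag(m_i) with d_i, m_i > 0. If for every index i one has L_{ii} ≤ d_i²/(2m_i), then every eigenvalue λ of the block matrix J = [[0, I], [-M⁻¹L, -M⁻¹D]] satisfies Re(λ) ≤ 0. -/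
open Matrix

lemma key_scalar {md dd c : ℝ} (hm : 0 < md) (hd : 0 < dd) (hc : 0 ≤ c)
    (hcert : c ≤ dd^2/(2*md)) {lam : ℂ} (ha : 0 < lam.re) :
    c < ‖(md:ℂ)*lam^2 + dd*lam + c‖ := by
  have h2 : 2*md*c ≤ dd^2 := by
    rw [le_div_iff₀ (by positivity)] at hcert; linarith
  set a := lam.re with hA
  set b := lam.im with hB
  have hz : ((md:ℂ)*lam^2 + dd*lam + c) =
      Complex.mk (md*(a^2-b^2)+dd*a+c) (md*(2*a*b)+dd*b) := by
    apply Complex.ext <;>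
      simp only [pow_two, Complex.add_re, Complex.add_im, Complex.mul_re, Complex.mul_im,
        Complex.ofReal_re, Complex.ofReal_im] <;> ring
  rw [hz]
  have hP : 0 < md*a^2 + dd*a := by nlinarith [mul_pos hd ha, mul_pos hm (mul_pos ha ha)]
  have hPQ : 0 < md*a^2 + dd*a + md*b^2 := by nlinarith [mul_nonneg hm.le (sq_nonneg b)]
  refine lt_of_pow_lt_pow_left₀ 2 (norm_nonneg _) ?_
  rw [Complex.sq_norm, Complex.normSq_mk]
  have hid : md*(((md*(a^2-b^2)+dd*a+c)*(md*(a^2-b^2)+dd*a+c)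
        + (md*(2*a*b)+dd*b)*(md*(2*a*b)+dd*b)) - c^2)
      = 2*c*(md*a^2+dd*a)*md + md*(md*a^2+dd*a+md*b^2)^2 + md*b^2*(dd^2-2*md*c) := by
    ring
  have hN : 0 < 2*c*(md*a^2+dd*a)*md + md*(md*a^2+dd*a+md*b^2)^2 + md*b^2*(dd^2-2*md*c) := by
    have t2 : 0 < md*(md*a^2+dd*a+md*b^2)^2 := mul_pos hm (pow_pos hPQ 2)
    have t1 : 0 ≤ 2*c*(md*a^2+dd*a)*md := by positivity
    have t3 : 0 ≤ md*b^2*(dd^2-2*md*c) := by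
      apply mul_nonneg (by positivity); linarith
    linarith
  nlinarith [hid, hN]

/-- Matrix form of the stability certificate: if `L` has zero row sums and nonpositive
off-diagonal entries and `L i i ≤ d i² / (2 m i)` for all `i`, then every eigenvalue of
`J = [[0, I], [-M⁻¹L, -M⁻¹D]]` has nonpositive real part. -/
theorem stability_certificate_matrix
    {n : ℕ} (L : Matrix (Fin n) (Fin n) ℝ) (d m : Fin n → ℝ)
    (hrow : L *ᵥ (fun _ => (1 : ℝ)) = 0)
    (hoff : ∀ i j, i ≠ j → L i j ≤ 0)
    (hd : ∀ i, 0 < d i) (hm : ∀ i, 0 < m i)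
    (hcert : ∀ i, L i i ≤ (d i) ^ 2 / (2 * m i))
    (lam : ℂ)
    (heig : ∃ v : (Fin n ⊕ Fin n) → ℂ, v ≠ 0 ∧
      ((Matrix.fromBlocks (0 : Matrix (Fin n) (Fin n) ℝ) (1 : Matrix (Fin n) (Fin n) ℝ)
        (-((Matrix.diagonal m)⁻¹ * L)) (-((Matrix.diagonal m)⁻¹ * Matrix.diagonal d))).map
          Complex.ofReal) *ᵥ v = lam • v) :
    lam.re ≤ 0 := by
  by_contra hcon
  push_neg at hcon
  obtain ⟨v, hv0, hv⟩ := heig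
  have hinv : (Matrix.diagonal m)⁻¹ = Matrix.diagonal (fun i => (m i)⁻¹) := by
    apply Matrix.inv_eq_right_inv
    rw [Matrix.diagonal_mul_diagonal]
    convert Matrix.diagonal_one
    exact mul_inv_cancel₀ (hm _).ne'
  rw [hinv] at hv
  set x : Fin n → ℂ := fun i => v (Sum.inl i) with hx_def
  -- second component of the eigenvector
  have hY : ∀ i, v (Sum.inr i) = lam * x i := by
    intro i
    have h1 := congrFun hv (Sum.inl i)
    simp only [Matrix.mulVec, dotProduct, Matrix.map_apply, Fintype.sum_sum_type,
      Matrix.fromBlocks_apply₁₁, Matrix.fromBlocks_apply₁₂, Matrix.one_apply,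
      Matrix.zero_apply, Pi.smul_apply, smul_eq_mul, Complex.ofReal_zero, apply_ite,
      Complex.ofReal_one, ite_mul, zero_mul, one_mul, Finset.sum_ite_eq, Finset.mem_univ,
      if_true, Finset.sum_const_zero, zero_add] at h1
    exact h1
  -- the quadratic-pencil row equations
  have hRow : ∀ i, (∑ j, (L i j : ℂ) * x j)
      + ((m i : ℂ) * lam^2 + (d i : ℂ) * lam) * x i = 0 := by
    intro i
    have h2 := congrFun hv (Sum.inr i)
    simp only [Matrix.mulVec, dotProduct, Matrix.map_apply, Fintype.sum_sum_type,
      Matrix.fromBlocks_apply₂₁, Matrix.fromBlocks_apply₂₂, Matrix.neg_apply,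
      Matrix.diagonal_mul, Matrix.diagonal_mul_diagonal, Matrix.diagonal_apply,
      Pi.smul_apply, smul_eq_mul, Complex.ofReal_neg, Complex.ofReal_mul,
      Complex.ofReal_inv, apply_ite, Complex.ofReal_zero, neg_mul, neg_zero,
      Finset.sum_ite_eq, Finset.mem_univ, if_true, Finset.sum_const_zero, zero_add] at h2
    simp only [hY] at h2
    simp only [ite_mul, zero_mul, Finset.sum_ite_eq, Finset.mem_univ, if_true] at h2
    have hmi : (m i : ℂ) ≠ 0 := by exact_mod_cast (hm i).ne'
    have hpull : ∑ j, -((↑(m i))⁻¹ * ↑(L i j) * x j)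
        = -((↑(m i))⁻¹ * ∑ j, (L i j : ℂ) * x j) := by
      rw [Finset.mul_sum, ← Finset.sum_neg_distrib]
      apply Finset.sum_congr rfl
      intros; ring
    rw [hpull] at h2
    field_simp at h2
    have h3 : (m i : ℂ) * ((∑ j, (L i j : ℂ) * x j)
        + ((m i : ℂ) * lam^2 + (d i : ℂ) * lam) * x i) = 0 := by
      linear_combination -(m i : ℂ) * h2
    exact (mul_eq_zero.mp h3).resolve_left hmi
  -- x is nonzero
  have hx : ∃ i, x i ≠ 0 := by
    by_contra hxa
    push_neg at hxa
    apply hv0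
    funext s
    cases s with
    | inl i => exact hxa i
    | inr i => rw [Pi.zero_apply, hY i, hxa i, mul_zero]
  obtain ⟨j0, hj0⟩ := hx
  -- index of maximal modulus
  obtain ⟨i0, -, hmax⟩ := Finset.exists_max_image Finset.univ
    (fun i => ‖x i‖) ⟨j0, Finset.mem_univ j0⟩
  have hxi0 : 0 < ‖x i0‖ :=
    lt_of_lt_of_le (norm_pos_iff.mpr hj0) (hmax j0 (Finset.mem_univ j0))
  -- row sums are zero
  have hsum : ∀ i, ∑ j, L i j = 0 := by
    intro i
    have := congrFun hrow i
    simpa [Matrix.mulVec, dotProduct] using this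
  -- Gershgorin radius equals the diagonal entry
  have hGer : ∑ j ∈ Finset.univ.erase i0, (-L i0 j) = L i0 i0 := by
    have h := hsum i0
    rw [← Finset.add_sum_erase _ _ (Finset.mem_univ i0)] at h
    rw [Finset.sum_neg_distrib]
    linarith
  have hc0 : 0 ≤ L i0 i0 := by
    rw [← hGer]
    apply Finset.sum_nonneg
    intro j hj
    have := hoff i0 j (Finset.ne_of_mem_erase hj).symm
    linarith
  -- split the row equation at i0
  have hsplit : ((m i0 : ℂ) * lam^2 + (d i0 : ℂ) * lam + (L i0 i0 : ℂ)) * x i0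
      = -∑ j ∈ Finset.univ.erase i0, (L i0 j : ℂ) * x j := by
    have h := hRow i0
    rw [← Finset.add_sum_erase _ _ (Finset.mem_univ i0)] at h
    linear_combination h
  -- Gershgorin-type bound
  have habs : ‖(m i0 : ℂ) * lam^2 + (d i0 : ℂ) * lam + (L i0 i0 : ℂ)‖
      * ‖x i0‖ ≤ (L i0 i0) * ‖x i0‖ := by
    rw [← norm_mul, hsplit, norm_neg]
    calc ‖∑ j ∈ Finset.univ.erase i0, (L i0 j : ℂ) * x j‖
        ≤ ∑ j ∈ Finset.univ.erase i0, ‖(L i0 j : ℂ) * x j‖ :=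
          norm_sum_le _ _
      _ = ∑ j ∈ Finset.univ.erase i0, (-L i0 j) * ‖x j‖ := by
          apply Finset.sum_congr rfl
          intro j hj
          rw [norm_mul, Complex.norm_real, Real.norm_eq_abs,
            abs_of_nonpos (hoff i0 j (Finset.ne_of_mem_erase hj).symm)]
      _ ≤ ∑ j ∈ Finset.univ.erase i0, (-L i0 j) * ‖x i0‖ := by
          apply Finset.sum_le_sum
          intro j hj
          exact mul_le_mul_of_nonneg_left (hmax j (Finset.mem_univ j))
            (by linarith [hoff i0 j (Finset.ne_of_mem_erase hj).symm])
      _ = (L i0 i0) * ‖x i0‖ := by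
          rw [← Finset.sum_mul, hGer]
  have hle : ‖(m i0 : ℂ) * lam^2 + (d i0 : ℂ) * lam + (L i0 i0 : ℂ)‖
      ≤ L i0 i0 := le_of_mul_le_mul_right habs hxi0
  exact absurd hle (not_le.mpr (key_scalar (hm i0) (hd i0) hc0 (hcert i0) hcon))
end

section
/- For the linear system M ẍ + D ẋ + L x = 0 with M, D diagonal positive and L symmetric positive semidefinite with one-dimensional kernel spanned by 𝟙, every eigenvalue of the associated first-order system is either 0 (simple, from the translational mode) or has strictly negative real part. -/
open Matrix Complex

/-- auxiliary: quadratic form of a real PSD matrix at a complex vector is a nonneg real. -/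
lemma star_dot_psd {n : ℕ} (L : Matrix (Fin n) (Fin n) ℝ) (hL : L.PosSemidef)
    (x : Fin n → ℂ) :
    ∃ a : ℝ, 0 ≤ a ∧ star x ⬝ᵥ ((L.map Complex.ofReal) *ᵥ x) = (a : ℂ) := by
  classical
  set p : Fin n → ℝ := fun i => (x i).re with hp
  set q : Fin n → ℝ := fun i => (x i).im with hq
  have hsym : ∀ i j, L j i = L i j := by
    intro i j
    have := congrFun (congrFun hL.1 i) j
    simpa [Matrix.conjTranspose_apply] using this
  refine ⟨p ⬝ᵥ (L *ᵥ p) + q ⬝ᵥ (L *ᵥ q), ?_, ?_⟩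
  · have h1 := hL.dotProduct_mulVec_nonneg p
    have h2 := hL.dotProduct_mulVec_nonneg q
    simp only [star_trivial] at h1 h2
    positivity
  · have expand : star x ⬝ᵥ ((L.map Complex.ofReal) *ᵥ x)
        = ∑ i, ∑ j, (L i j : ℂ) * (starRingEnd ℂ (x i) * x j) := by
      simp only [dotProduct, mulVec, Matrix.map_apply, Finset.mul_sum, Pi.star_apply,
        Complex.star_def]
      refine Finset.sum_congr rfl fun i _ => Finset.sum_congr rfl fun j _ => by ring
    have term : ∀ i j, (L i j : ℂ) * (starRingEnd ℂ (x i) * x j)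
        = ((L i j * (p i * p j + q i * q j) : ℝ) : ℂ)
          + ((L i j * (p i * q j - q i * p j) : ℝ) : ℂ) * I := by
      intro i j
      have hcx : starRingEnd ℂ (x i) * x j
          = ((p i * p j + q i * q j : ℝ) : ℂ) + ((p i * q j - q i * p j : ℝ) : ℂ) * I := by
        apply Complex.ext <;>
          simp [Complex.mul_re, Complex.mul_im, hp, hq] <;> ring
      rw [hcx]
      push_cast
      ring
    rw [expand]
    simp only [term]
    simp only [Finset.sum_add_distrib, ← Finset.sum_mul, ← Complex.ofReal_sum]
    have hS2 : ∑ i, ∑ j, L i j * (p i * q j - q i * p j) = 0 := by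
      have hsplit : ∀ i, ∑ j, L i j * (p i * q j - q i * p j)
          = (∑ j, L i j * (p i * q j)) - ∑ j, L i j * (q i * p j) := by
        intro i
        rw [← Finset.sum_sub_distrib]
        exact Finset.sum_congr rfl fun j _ => by ring
      simp only [hsplit, Finset.sum_sub_distrib]
      have hcomm : ∑ i, ∑ j, L i j * (p i * q j) = ∑ i, ∑ j, L i j * (q i * p j) := by
        rw [Finset.sum_comm]
        refine Finset.sum_congr rfl fun i _ => Finset.sum_congr rfl fun j _ => ?_
        rw [hsym i j]; ring
      rw [hcomm, sub_self]
    rw [hS2]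
    have hS1 : ∑ i, ∑ j, L i j * (p i * p j + q i * q j) = p ⬝ᵥ (L *ᵥ p) + q ⬝ᵥ (L *ᵥ q) := by
      simp only [dotProduct, mulVec, Finset.mul_sum, ← Finset.sum_add_distrib]
      exact Finset.sum_congr rfl fun i _ => Finset.sum_congr rfl fun j _ => by ring
    rw [hS1]
    simp




/-- For `M ẍ + D ẋ + L x = 0` with `M, D` positive diagonal and `L` symmetric PSD with
kernel spanned by the all-ones vector, every eigenvalue of the first-order system matrix
`J = [[0, I], [-M⁻¹L, -M⁻¹D]]` is either `0` (a simple translational mode) or has strictly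
negative real part. -/
theorem lossless_small_signal_stability
    {n : ℕ} (L : Matrix (Fin n) (Fin n) ℝ) (d m : Fin n → ℝ)
    (hL : L.PosSemidef)
    (hker : ∀ v : Fin n → ℝ, L *ᵥ v = 0 ↔ ∃ c : ℝ, v = fun _ => c)
    (hd : ∀ i, 0 < d i) (hm : ∀ i, 0 < m i) :
    let J : Matrix (Fin n ⊕ Fin n) (Fin n ⊕ Fin n) ℝ :=
      Matrix.fromBlocks 0 1 (-((Matrix.diagonal m)⁻¹ * L))
        (-((Matrix.diagonal m)⁻¹ * Matrix.diagonal d))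
    (∀ lam : ℂ, (∃ v : (Fin n ⊕ Fin n) → ℂ, v ≠ 0 ∧
        (J.map Complex.ofReal) *ᵥ v = lam • v) → lam = 0 ∨ lam.re < 0) ∧
    (∀ x : (Fin n ⊕ Fin n) → ℝ, J *ᵥ x = 0 →
        ∃ c : ℝ, x = Sum.elim (fun _ => c) (fun _ => (0 : ℝ))) := by
  intro J
  have hMinv : (Matrix.diagonal m)⁻¹ = Matrix.diagonal (fun i => (m i)⁻¹) := by
    apply Matrix.inv_eq_right_inv
    rw [Matrix.diagonal_mul_diagonal]
    rw [show (fun i => m i * (m i)⁻¹) = fun _ => (1:ℝ) from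
      funext fun i => mul_inv_cancel₀ (hm i).ne', Matrix.diagonal_one]
  have hJ : J = Matrix.fromBlocks 0 1
      (-(Matrix.diagonal (fun i => (m i)⁻¹) * L))
      (-(Matrix.diagonal (fun i => (m i)⁻¹) * Matrix.diagonal d)) := by
    rw [show J = Matrix.fromBlocks 0 1 (-((Matrix.diagonal m)⁻¹ * L))
      (-((Matrix.diagonal m)⁻¹ * Matrix.diagonal d)) from rfl, hMinv]
  constructor
  · -- eigenvalue part
    rintro lam ⟨v, hv, heig⟩
    set x : Fin n → ℂ := v ∘ Sum.inl with hxdef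
    set y : Fin n → ℂ := v ∘ Sum.inr with hydef
    have hvelim : v = Sum.elim x y := funext fun s => by cases s <;> rfl
    have hJmap : J.map Complex.ofReal = Matrix.fromBlocks 0 1
        (-(Matrix.diagonal (fun i => ((m i : ℂ))⁻¹) * L.map Complex.ofReal))
        (-(Matrix.diagonal (fun i => ((m i : ℂ))⁻¹) * Matrix.diagonal (fun i => (d i : ℂ)))) := by
      rw [hJ]
      ext (i | i) (j | j)
      · simp
      · simp [Matrix.one_apply, apply_ite]
      · simp only [Matrix.map_apply, Matrix.fromBlocks_apply₂₁, Matrix.neg_apply,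
          Matrix.diagonal_mul]
        push_cast
        ring
      · rcases eq_or_ne i j with rfl | hij
        · simp only [Matrix.map_apply, Matrix.fromBlocks_apply₂₂, Matrix.neg_apply,
            Matrix.diagonal_mul, Matrix.diagonal_apply_eq]
          push_cast; ring
        · simp [Matrix.map_apply, Matrix.diagonal_mul, Matrix.diagonal_apply_ne _ hij]
    rw [hJmap, hvelim, Matrix.fromBlocks_mulVec] at heig
    have h1 : ∀ i, y i = lam * x i := by
      intro i
      have := congrFun heig (Sum.inl i)
      simpa using this
    have h2 : ∀ i, -(((m i : ℂ))⁻¹ * ((L.map Complex.ofReal *ᵥ x) i))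
        - ((m i : ℂ))⁻¹ * ((d i : ℂ) * y i) = lam * y i := by
      intro i
      have := congrFun heig (Sum.inr i)
      simp only [Sum.elim_inr, Sum.elim_comp_inl, Sum.elim_comp_inr, Matrix.neg_mulVec,
        ← Matrix.mulVec_mulVec, Pi.add_apply, Pi.neg_apply, Matrix.mulVec_diagonal,
        Pi.smul_apply, smul_eq_mul] at this
      linear_combination this
    -- now derive the quadratic identity
    obtain ⟨a, ha0, haEq⟩ := star_dot_psd L hL x
    set b' : ℝ := ∑ i, d i * Complex.normSq (x i) with hb'def
    set c' : ℝ := ∑ i, m i * Complex.normSq (x i) with hc'def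
    have hxne : x ≠ 0 := by
      intro h0
      apply hv
      funext s
      cases s with
      | inl i => exact congrFun h0 i
      | inr i => show y i = 0; rw [h1 i, congrFun h0 i]; simp
    obtain ⟨i0, hi0⟩ : ∃ i, x i ≠ 0 := by
      by_contra h; push_neg at h; exact hxne (funext h)
    have hb : 0 < b' := Finset.sum_pos'
      (fun i _ => mul_nonneg (hd i).le (Complex.normSq_nonneg _))
      ⟨i0, Finset.mem_univ _, mul_pos (hd i0) (Complex.normSq_pos.mpr hi0)⟩
    have hc : 0 < c' := Finset.sum_pos'
      (fun i _ => mul_nonneg (hm i).le (Complex.normSq_nonneg _))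
      ⟨i0, Finset.mem_univ _, mul_pos (hm i0) (Complex.normSq_pos.mpr hi0)⟩
    have hkey : ∀ i, (L.map Complex.ofReal *ᵥ x) i + (d i : ℂ) * (lam * x i)
        + (m i : ℂ) * (lam ^ 2 * x i) = 0 := by
      intro i
      have h2i := h2 i
      have h1i := h1 i
      have hmi : ((m i : ℝ) : ℂ) ≠ 0 := by exact_mod_cast (hm i).ne'
      linear_combination (-(m i : ℂ)) * h2i - ((d i : ℂ) + (m i : ℂ) * lam) * h1i
        - ((L.map Complex.ofReal *ᵥ x) i + (d i : ℂ) * y i) * (mul_inv_cancel₀ hmi)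
    have h0 : ∑ i, (starRingEnd ℂ) (x i) * ((L.map Complex.ofReal *ᵥ x) i
        + (d i : ℂ) * (lam * x i) + (m i : ℂ) * (lam ^ 2 * x i)) = 0 :=
      Finset.sum_eq_zero fun i _ => by rw [hkey i, mul_zero]
    simp only [mul_add, Finset.sum_add_distrib] at h0
    have e1 : ∑ i, (starRingEnd ℂ) (x i) * (L.map Complex.ofReal *ᵥ x) i = (a : ℂ) := by
      rw [← haEq]
      simp [dotProduct]
    have e2 : ∑ i, (starRingEnd ℂ) (x i) * ((d i : ℂ) * (lam * x i)) = lam * (b' : ℂ) := by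
      have hterm : ∀ i : Fin n, (starRingEnd ℂ) (x i) * ((d i : ℂ) * (lam * x i))
          = lam * ((d i * Complex.normSq (x i) : ℝ) : ℂ) := by
        intro i
        push_cast
        rw [Complex.normSq_eq_conj_mul_self]
        ring
      rw [hb'def]
      simp only [hterm, ← Finset.mul_sum]
      push_cast
      ring
    have e3 : ∑ i, (starRingEnd ℂ) (x i) * ((m i : ℂ) * (lam ^ 2 * x i)) = lam ^ 2 * (c' : ℂ) := by
      have hterm : ∀ i : Fin n, (starRingEnd ℂ) (x i) * ((m i : ℂ) * (lam ^ 2 * x i))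
          = lam ^ 2 * ((m i * Complex.normSq (x i) : ℝ) : ℂ) := by
        intro i
        push_cast
        rw [Complex.normSq_eq_conj_mul_self]
        ring
      rw [hc'def]
      simp only [hterm, ← Finset.mul_sum]
      push_cast
      ring
    rw [e1, e2, e3] at h0
    -- extract real and imaginary parts
    have hre := congrArg Complex.re h0
    have him := congrArg Complex.im h0
    simp only [pow_two, Complex.add_re, Complex.add_im, Complex.mul_re, Complex.mul_im,
      Complex.ofReal_re, Complex.ofReal_im, Complex.zero_re, Complex.zero_im,
      mul_zero, zero_mul, sub_zero, add_zero, zero_add] at hre him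
    rcases eq_or_ne lam.im 0 with ht | ht
    · rcases lt_trichotomy lam.re 0 with h | h | h
      · exact Or.inr h
      · left
        exact Complex.ext h ht
      · exfalso
        rw [ht] at hre
        nlinarith [hre, ha0, hb, hc, h]
    · right
      have hfac : lam.im * (b' + 2 * c' * lam.re) = 0 := by linear_combination him
      have hz : b' + 2 * c' * lam.re = 0 := (mul_eq_zero.mp hfac).resolve_left ht
      nlinarith [hb, hc]
  · -- kernel part
    intro x hx
    rw [hJ] at hx
    have hxelim : x = Sum.elim (x ∘ Sum.inl) (x ∘ Sum.inr) := funext fun s => by cases s <;> rfl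
    rw [hxelim, Matrix.fromBlocks_mulVec] at hx
    have h1 : ∀ i, x (Sum.inr i) = 0 := by
      intro i
      have := congrFun hx (Sum.inl i)
      simpa using this
    have h2 : ∀ i, (L *ᵥ (x ∘ Sum.inl)) i = 0 := by
      intro i
      have h := congrFun hx (Sum.inr i)
      simp only [Sum.elim_inr, Sum.elim_comp_inl, Sum.elim_comp_inr, Matrix.neg_mulVec,
        ← Matrix.mulVec_mulVec, Pi.add_apply, Pi.neg_apply, Matrix.mulVec_diagonal,
        Pi.zero_apply] at h
      have hz : (x ∘ Sum.inr) i = 0 := h1 i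
      rw [hz] at h
      have h2' : ((m i)⁻¹ : ℝ) * (L *ᵥ (x ∘ Sum.inl)) i = 0 := by
        rw [mul_zero] at h; linarith
      exact (mul_eq_zero.mp h2').resolve_left (inv_ne_zero (hm i).ne')
    obtain ⟨c, hc⟩ := (hker (x ∘ Sum.inl)).mp (funext h2)
    refine ⟨c, funext fun s => ?_⟩
    cases s with
    | inl i => simpa using congrFun hc i
    | inr i => simpa using h1 i
end
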